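/- Let W be a set, M a Boolean subalgebra of P(W), and f : M × M → M satisfy β1–β4. Then for all A, B ∈ M: A ∩ f(B, A) = A ∩ B. -/
import Mathlib

/-- In a conditional model satisfying β1–β4, `A ∩ f(B,A) = A ∩ B`. -/
theorem cond_model_inference {W : Type*} (M : Set (Set W))
    (hM_univ : (Set.univ : Set W) ∈ M)
    (hM_inter : ∀ A ∈ M, ∀ B ∈ M, A ∩ B ∈ M)
    (hM_compl : ∀ A ∈ M, Aᶜ ∈ M)
    (f : Set W → Set W → Set W)
    (hf : ∀ A ∈ M, ∀ B ∈ M, f B A ∈ M)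
    (hβ1 : ∀ A ∈ M, ∀ B ∈ M, A ⊆ B → A ≠ ∅ → f B A = Set.univ)
    (hβ2 : ∀ A ∈ M, ∀ B ∈ M, ∀ C ∈ M, f (B ∪ C) A ⊆ f B A ∪ f C A)
    (hβ3 : ∀ A ∈ M, ∀ B ∈ M, A ∩ f B A ⊆ B)
    (hβ4 : ∀ A ∈ M, ∀ B ∈ M, f Bᶜ A = (f B A)ᶜ) :
    ∀ A ∈ M, ∀ B ∈ M, A ∩ f B A = A ∩ B := by
  intro A hA B hB
  apply Set.eq_of_subset_of_subset
  · intro x hx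
    exact ⟨hx.1, hβ3 A hA B hB hx⟩
  · intro x hx
    refine ⟨hx.1, ?_⟩
    by_contra h
    have : x ∈ A ∩ f Bᶜ A := ⟨hx.1, by rw [hβ4 A hA B hB]; exact h⟩
    exact (hβ3 A hA Bᶜ (hM_compl B hB) this) hx.2
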